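/- Let κ = (3−√5)/2 and λ > 0, and for ε ∈ (0, ε₀] with ε₀ = e^{−λT/κ}/√κ define ν_ε(t, x(·)) = α_ε(t)·β_ε(t, x(·)) with α_ε(t) = (e^{−λt/κ} − ε√κ)/ε, β_ε(t, x(·)) = √(ε⁴ + V(t, x(·))). Suppose V(t,x(·)) ≥ κM(t,x)², ∂_t V = 0, and ‖∇V(t,x(·))‖ ≤ 2‖x(t)‖ ≤ 2M(t,x). Then with ∂_t ν_ε(t,x(·)) = −(λ e^{−λt/κ} β_ε(t,x(·)))/(κ ε) and ∇ν_ε(t,x(·)) = α_ε(t)/(2β_ε(t,x(·))) · ∇V(t,x(·)), the dissipation inequality ∂_t ν_ε(t, x(·)) + λ·M(t,x)·‖∇ν_ε(t, x(·))‖ ≤ 0 holds for all (t, x(·)) ∈ [0,T) × C([−h,T], ℝⁿ). -/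
import Mathlib


noncomputable section

/-- The constant `κ = (3 - √5)/2`. -/
def kap : ℝ := (3 - Real.sqrt 5) / 2

theorem stmt11 (n : ℕ) (lam T h : ℝ) (hlam : 0 < lam) (hT : 0 < T) (hh : 0 < h)
    (ε : ℝ) (hε : ε ∈ Set.Ioc 0 (Real.exp (-(lam * T) / kap) / Real.sqrt kap))
    (t : ℝ) (ht : t ∈ Set.Ico 0 T)
    (Mv bn Vv : ℝ) (g : EuclideanSpace ℝ (Fin n))
    (hMv : 0 ≤ Mv) (hbn : bn ≤ Mv)
    (hVlow : kap * Mv ^ 2 ≤ Vv)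
    (hdtV : (0 : ℝ) = 0)
    (hgrad : ‖g‖ ≤ 2 * bn) :
    -(lam * Real.exp (-(lam * t) / kap) * Real.sqrt (ε ^ 4 + Vv)) / (kap * ε)
      + lam * Mv *
        ‖(((Real.exp (-(lam * t) / kap) - ε * Real.sqrt kap) / ε) /
            (2 * Real.sqrt (ε ^ 4 + Vv))) • g‖ ≤ 0 := by
  obtain ⟨hεpos, hεle⟩ := hε
  obtain ⟨ht0, htT⟩ := ht
  have hs5 : Real.sqrt 5 < 3 := by
    nlinarith [Real.sq_sqrt (show (0:ℝ) ≤ 5 by norm_num), Real.sqrt_nonneg 5]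
  have hkap : 0 < kap := by unfold kap; linarith
  have hsk : 0 < Real.sqrt kap := Real.sqrt_pos.2 hkap
  set E := Real.exp (-(lam * t) / kap) with hEdef
  have hET : Real.exp (-(lam * T) / kap) ≤ E := by
    apply Real.exp_le_exp.2
    gcongr
  have hεk : ε * Real.sqrt kap ≤ E := by
    have := (le_div_iff₀ hsk).1 hεle
    calc ε * Real.sqrt kap ≤ Real.exp (-(lam * T) / kap) := this
      _ ≤ E := hET
  have hαnum : (0:ℝ) ≤ E - ε * Real.sqrt kap := by linarith
  have hα : 0 ≤ (E - ε * Real.sqrt kap) / ε := div_nonneg hαnum hεpos.le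
  have hVv : 0 ≤ Vv := le_trans (by positivity) hVlow
  have hβin : 0 < ε ^ 4 + Vv := by positivity
  set β := Real.sqrt (ε ^ 4 + Vv) with hβdef
  have hβ : 0 < β := Real.sqrt_pos.2 hβin
  have hβsq : β ^ 2 = ε ^ 4 + Vv := Real.sq_sqrt hβin.le
  have hgnn : (0:ℝ) ≤ ‖g‖ := norm_nonneg g
  have hg2 : ‖g‖ ≤ 2 * Mv := by linarith
  rw [norm_smul, Real.norm_eq_abs,
    abs_of_nonneg (div_nonneg hα (by positivity))]
  have key : lam * Mv * ((E - ε * Real.sqrt kap) / ε / (2 * β) * ‖g‖)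
      ≤ lam * E * β / (kap * ε) := by
    rw [div_div, div_mul_eq_mul_div, ← mul_div_assoc,
      div_le_div_iff₀ (by positivity) (by positivity)]
    have h0 : (0:ℝ) ≤ ε ^ 4 := by positivity
    have h1 : kap * Mv ^ 2 ≤ β ^ 2 := by linarith
    have c1 : Mv * ‖g‖ ≤ 2 * Mv ^ 2 := by nlinarith
    have c3 : kap * (Mv * ‖g‖) * (E - ε * Real.sqrt kap)
        ≤ 2 * β ^ 2 * (E - ε * Real.sqrt kap) := by
      apply mul_le_mul_of_nonneg_right _ hαnum
      nlinarith
    have c4 : 2 * β ^ 2 * (E - ε * Real.sqrt kap) ≤ 2 * β ^ 2 * E := by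
      apply mul_le_mul_of_nonneg_left _ (by positivity)
      nlinarith [mul_nonneg hεpos.le hsk.le]
    have c5 := mul_le_mul_of_nonneg_left (c3.trans c4)
      (by positivity : (0:ℝ) ≤ lam * ε)
    linarith [c5]
  rw [neg_div]
  linarith
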